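/- The homotopy H° = Σ_{t=1}^n (g'f')^{⊗(t−1)} ⊗ h' ⊗ 1^{⊗(n−t)} on the tensor coalgebra T*_c(sĀ) satisfies the coalgebra homotopy condition Δ_B ∘ H° = (H° ⊗ 1 + G°F° ⊗ H°) ∘ Δ_B, where Δ_B is the deconcatenation coproduct Δ_B[a₁,…,a_n] = Σ_{i=0}^{n} [a₁,…,a_i] ⊠ [a_{i+1},…,a_n]. -/

import Mathlib

set_option maxRecDepth 4000


open scoped TensorProduct

noncomputable section

variable {k : Type*} [Field k] [CharZero k]
variable {A : Type*} [AddCommGroup A] [Module k A]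

/-- `H° = Σ_{t=1}^n (g'f')^{⊗(t-1)} ⊗ h' ⊗ 1^{⊗(n-t)}` on the `n`-th tensor component of
the tensor coalgebra. -/
def Hcirc (f : A →ₗ[k] A) (g : A →ₗ[k] A) (h : A →ₗ[k] A) (n : ℕ) :
    (⨂[k] (_ : Fin n), A) →ₗ[k] ⨂[k] (_ : Fin n), A :=
  ∑ t : Fin n, PiTensorProduct.map
    (fun i => if i < t then g ∘ₗ f else if i = t then h else LinearMap.id)

/-- The canonical identification `A^{⊗a} ⊗ A^{⊗b} ≅ A^{⊗(a+b)}` (concatenation), i.e. the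
component of the deconcatenation coproduct `Δ_B`. -/
def concatEquiv (a b : ℕ) :
    ((⨂[k] (_ : Fin a), A) ⊗[k] (⨂[k] (_ : Fin b), A)) ≃ₗ[k] ⨂[k] (_ : Fin (a + b)), A :=
  (PiTensorProduct.tmulEquiv k A).trans
    (PiTensorProduct.reindex k (fun _ : Fin a ⊕ Fin b => A) finSumFinEquiv)

lemma map_concat (a b : ℕ) (F : Fin (a + b) → (A →ₗ[k] A)) (x : Fin a → A) (y : Fin b → A) :
    PiTensorProduct.map F ((concatEquiv (k := k) (A := A) a b)
        (PiTensorProduct.tprod k x ⊗ₜ[k] PiTensorProduct.tprod k y)) =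
      concatEquiv a b
        ((PiTensorProduct.map fun j => F (Fin.castAdd b j)) (PiTensorProduct.tprod k x) ⊗ₜ[k]
         (PiTensorProduct.map fun j => F (Fin.natAdd a j)) (PiTensorProduct.tprod k y)) := by
  simp only [concatEquiv, LinearEquiv.trans_apply, PiTensorProduct.map_tprod]
  rw [show (PiTensorProduct.tprod k x ⊗ₜ[k] PiTensorProduct.tprod k y)
      = ((⨂ₜ[k] i, x i) ⊗ₜ[k] (⨂ₜ[k] i, y i)) from rfl,
    PiTensorProduct.tmulEquiv_apply]
  rw [show ((PiTensorProduct.tprod k fun j => F (Fin.castAdd b j) (x j)) ⊗ₜ[k]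
      (PiTensorProduct.tprod k fun j => F (Fin.natAdd a j) (y j)))
      = ((⨂ₜ[k] j, F (Fin.castAdd b j) (x j)) ⊗ₜ[k] (⨂ₜ[k] j, F (Fin.natAdd a j) (y j))) from rfl,
    PiTensorProduct.tmulEquiv_apply]
  simp only [PiTensorProduct.reindex_tprod, PiTensorProduct.map_tprod]
  refine congrArg _ (funext fun i => ?_)
  obtain ⟨s, rfl⟩ := finSumFinEquiv.surjective i
  rcases s with j | j <;> simp

/- STATEMENT 15: the homotopy `H°` on the tensor coalgebra satisfies the coalgebra
homotopy condition `Δ_B ∘ H° = (H° ⊗ 1 + G°F° ⊗ H°) ∘ Δ_B`; componentwise, for each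
splitting `n = a + b` of a tensor degree, under the concatenation identification,
`H°_{a+b} = H°_a ⊗ 1 + (g'f')^{⊗a} ⊗ H°_b`. -/
theorem stmt15 (f g h : A →ₗ[k] A)
    (hfg : f ∘ₗ g = LinearMap.id)
    (hfh : f ∘ₗ h = 0) (hhg : h ∘ₗ g = 0) (hhh : h ∘ₗ h = 0)
    (a b : ℕ) :
    Hcirc f g h (a + b) ∘ₗ (concatEquiv (k := k) (A := A) a b).toLinearMap =
      (concatEquiv (k := k) (A := A) a b).toLinearMap ∘ₗ
        (TensorProduct.map (Hcirc f g h a) LinearMap.id +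
         TensorProduct.map (PiTensorProduct.map fun _ : Fin a => g ∘ₗ f)
           (Hcirc f g h b)) := by
  ext x y
  simp only [LinearMap.compMultilinearMap_apply, TensorProduct.AlgebraTensorModule.curry_apply,
    TensorProduct.curry_apply, LinearMap.coe_restrictScalars, LinearMap.coe_comp,
    Function.comp_apply, LinearEquiv.coe_coe, LinearMap.add_apply, TensorProduct.map_tmul,
    LinearMap.id_coe, id_eq]
  rw [Hcirc, Hcirc, Hcirc]
  simp only [LinearMap.coe_sum, Finset.sum_apply, TensorProduct.sum_tmul,
    TensorProduct.tmul_sum, map_add, map_sum, map_concat]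
  rw [← Equiv.sum_comp finSumFinEquiv, Fintype.sum_sum_type]
  congr 1
  · refine Finset.sum_congr rfl fun u _ => ?_
    have h1 : (fun j : Fin a => if Fin.castAdd b j < finSumFinEquiv (Sum.inl u) then g ∘ₗ f
        else if Fin.castAdd b j = finSumFinEquiv (Sum.inl u) then h else LinearMap.id)
        = fun i => if i < u then g ∘ₗ f else if i = u then h else LinearMap.id := by
      funext j
      rw [finSumFinEquiv_apply_left]
      rcases lt_trichotomy j u with hj | rfl | hj
      · rw [if_pos (show Fin.castAdd b j < Fin.castAdd b u by
            have := Fin.lt_def.mp hj; simp only [Fin.lt_def, Fin.coe_castAdd]; omega), if_pos hj]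
      · rw [if_neg (lt_irrefl _), if_pos rfl, if_neg (lt_irrefl _), if_pos rfl]
      · rw [if_neg (show ¬Fin.castAdd b j < Fin.castAdd b u by
            have := Fin.lt_def.mp hj; simp only [Fin.lt_def, Fin.coe_castAdd]; omega),
          if_neg (show ¬Fin.castAdd b j = Fin.castAdd b u by
            have := Fin.lt_def.mp hj; simp only [Fin.ext_iff, Fin.coe_castAdd]; omega),
          if_neg (asymm hj), if_neg hj.ne']
    have h2 : (fun j : Fin b => if Fin.natAdd a j < finSumFinEquiv (Sum.inl u) then g ∘ₗ f
        else if Fin.natAdd a j = finSumFinEquiv (Sum.inl u) then h else LinearMap.id)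
        = fun _ => (LinearMap.id : A →ₗ[k] A) := by
      funext j
      rw [finSumFinEquiv_apply_left]
      rw [if_neg (show ¬Fin.natAdd a j < Fin.castAdd b u by
          have := u.isLt; simp only [Fin.lt_def, Fin.coe_natAdd, Fin.coe_castAdd]; omega),
        if_neg (show ¬Fin.natAdd a j = Fin.castAdd b u by
          have := u.isLt; simp only [Fin.ext_iff, Fin.coe_natAdd, Fin.coe_castAdd]; omega)]
    rw [h1, h2]
    simp [PiTensorProduct.map_tprod]
  · refine Finset.sum_congr rfl fun u _ => ?_
    have h1 : (fun j : Fin a => if Fin.castAdd b j < finSumFinEquiv (Sum.inr u) then g ∘ₗ f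
        else if Fin.castAdd b j = finSumFinEquiv (Sum.inr u) then h else LinearMap.id)
        = fun _ : Fin a => g ∘ₗ f := by
      funext j
      rw [finSumFinEquiv_apply_right]
      rw [if_pos (show Fin.castAdd b j < Fin.natAdd a u by
        have := j.isLt; simp only [Fin.lt_def, Fin.coe_castAdd, Fin.coe_natAdd]; omega)]
    have h2 : (fun j : Fin b => if Fin.natAdd a j < finSumFinEquiv (Sum.inr u) then g ∘ₗ f
        else if Fin.natAdd a j = finSumFinEquiv (Sum.inr u) then h else LinearMap.id)
        = fun i => if i < u then g ∘ₗ f else if i = u then h else LinearMap.id := by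
      funext j
      rw [finSumFinEquiv_apply_right]
      rcases lt_trichotomy j u with hj | rfl | hj
      · rw [if_pos (show Fin.natAdd a j < Fin.natAdd a u by
            have := Fin.lt_def.mp hj; simp only [Fin.lt_def, Fin.coe_natAdd]; omega), if_pos hj]
      · rw [if_neg (lt_irrefl _), if_pos rfl, if_neg (lt_irrefl _), if_pos rfl]
      · rw [if_neg (show ¬Fin.natAdd a j < Fin.natAdd a u by
            have := Fin.lt_def.mp hj; simp only [Fin.lt_def, Fin.coe_natAdd]; omega),
          if_neg (show ¬Fin.natAdd a j = Fin.natAdd a u by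
            have := Fin.lt_def.mp hj; simp only [Fin.ext_iff, Fin.coe_natAdd]; omega),
          if_neg (asymm hj), if_neg hj.ne']
    rw [h1, h2]
end
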